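/- There exists a constant c₀ > 0 such that for every N ≥ 2 and every family {ρ_{l,m} : 1 ≤ l < m ≤ N} of probability distributions on {0,1}² that is marginally consistent (for each coordinate l, all pairs containing l induce the same single-bit marginal) and satisfies |ρ_{l,m}(a,a') − 1/4| ≤ c₀/N² for all 1 ≤ l < m ≤ N and all (a,a') ∈ {0,1}², there exists a probability distribution P on {0,1}^N such that for every l < m the joint distribution of (v_l, v_m) under v ∼ P equals ρ_{l,m}. -/

import Mathlib

open Finset

noncomputable def χ : Bool → ℝ := fun a => if a then 1 else -1

lemma chi_sq (b : Bool) : χ b * χ b = 1 := by cases b <;> norm_num [χ]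

lemma orth {N : ℕ} (S : Finset (Fin N)) :
    ∑ v : Fin N → Bool, ∏ i ∈ S, χ (v i) = if S = ∅ then (2:ℝ)^N else 0 := by
  rcases S.eq_empty_or_nonempty with h | ⟨i₀, hi₀⟩
  · subst h
    simp [Finset.card_univ, Fintype.card_fun]
  · rw [if_neg (Finset.nonempty_iff_ne_empty.mp ⟨i₀, hi₀⟩)]
    apply Finset.sum_ninvolution (fun v => Function.update v i₀ (!v i₀))
    · intro v
      have key : ∏ i ∈ S, χ (Function.update v i₀ (!v i₀) i) = - ∏ i ∈ S, χ (v i) := by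
        rw [← Finset.mul_prod_erase S _ hi₀, ← Finset.mul_prod_erase S (fun i => χ (v i)) hi₀]
        have h1 : χ (Function.update v i₀ (!v i₀) i₀) = - χ (v i₀) := by
          rw [Function.update_self]; cases v i₀ <;> norm_num [χ]
        have h2 : ∏ i ∈ S.erase i₀, χ (Function.update v i₀ (!v i₀) i) =
            ∏ i ∈ S.erase i₀, χ (v i) := by
          apply Finset.prod_congr rfl
          intro i hi
          rw [Function.update_of_ne (Finset.ne_of_mem_erase hi)]
        rw [h1, h2]; ring
      rw [key]; ring
    · intro v hv
      intro heq
      have := congrFun heq i₀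
      simp at this
    · intro v; exact Finset.mem_univ _
    · intro v
      funext i
      by_cases h : i = i₀
      · subst h; simp
      · simp [Function.update_of_ne h]




lemma sum_one' (N : ℕ) : ∑ _v : Fin N → Bool, (1:ℝ) = 2^N := by
  simpa using orth (∅ : Finset (Fin N))

lemma sum_chi1 {N : ℕ} (l : Fin N) : ∑ v : Fin N → Bool, χ (v l) = 0 := by
  simpa using orth ({l} : Finset (Fin N))

lemma sum_chi2 {N : ℕ} (l m : Fin N) :
    ∑ v : Fin N → Bool, χ (v l) * χ (v m) = if l = m then (2:ℝ)^N else 0 := by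
  by_cases h : l = m
  · rw [if_pos h]
    calc ∑ v : Fin N → Bool, χ (v l) * χ (v m) = ∑ _v : Fin N → Bool, (1:ℝ) :=
          Finset.sum_congr rfl (fun v _ => by rw [← h]; exact chi_sq _)
      _ = 2^N := sum_one' N
  · rw [if_neg h]
    have := orth ({l, m} : Finset (Fin N))
    rw [if_neg (by simp)] at this
    rw [← this]
    exact Finset.sum_congr rfl (fun v _ => (Finset.prod_pair (f := fun i => χ (v i)) h).symm)

lemma sum_chi3 {N : ℕ} (l m k : Fin N) (h : l ≠ m) :
    ∑ v : Fin N → Bool, χ (v l) * χ (v m) * χ (v k) = 0 := by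
  by_cases hkl : k = l
  · calc ∑ v : Fin N → Bool, χ (v l) * χ (v m) * χ (v k)
        = ∑ v : Fin N → Bool, χ (v m) :=
          Finset.sum_congr rfl (fun v _ => by
            rw [hkl]; linear_combination χ (v m) * chi_sq (v l))
      _ = 0 := sum_chi1 m
  · by_cases hkm : k = m
    · calc ∑ v : Fin N → Bool, χ (v l) * χ (v m) * χ (v k)
          = ∑ v : Fin N → Bool, χ (v l) :=
            Finset.sum_congr rfl (fun v _ => by
              rw [hkm]; linear_combination χ (v l) * chi_sq (v m))
        _ = 0 := sum_chi1 l
    · have := orth ({l, m, k} : Finset (Fin N))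
      rw [if_neg (by simp)] at this
      rw [← this]
      refine Finset.sum_congr rfl (fun v _ => ?_)
      rw [Finset.prod_insert (by simp [h, Ne.symm hkl]),
        Finset.prod_pair (f := fun i => χ (v i)) (fun hh : m = k => hkm hh.symm)]
      ring

lemma sum_chi4 {N : ℕ} (l m k j : Fin N) (hlm : l ≠ m) (hkj : k ≠ j) :
    ∑ v : Fin N → Bool, χ (v l) * χ (v m) * (χ (v k) * χ (v j)) =
      if l = k ∧ m = j ∨ l = j ∧ m = k then (2:ℝ)^N else 0 := by
  by_cases hkl : k = l
  · calc ∑ v : Fin N → Bool, χ (v l) * χ (v m) * (χ (v k) * χ (v j))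
        = ∑ v : Fin N → Bool, χ (v m) * χ (v j) :=
          Finset.sum_congr rfl (fun v _ => by
            rw [hkl]; linear_combination (χ (v m) * χ (v j)) * chi_sq (v l))
      _ = if m = j then (2:ℝ)^N else 0 := sum_chi2 m j
      _ = _ := by
          by_cases hmj : m = j
          · rw [if_pos hmj, if_pos (Or.inl ⟨hkl.symm, hmj⟩)]
          · rw [if_neg hmj, if_neg]
            rintro (⟨-, h2⟩ | ⟨h1, h2⟩)
            · exact hmj h2
            · exact hlm (h2.trans hkl).symm
  · by_cases hkm : k = m
    · calc ∑ v : Fin N → Bool, χ (v l) * χ (v m) * (χ (v k) * χ (v j))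
          = ∑ v : Fin N → Bool, χ (v l) * χ (v j) :=
            Finset.sum_congr rfl (fun v _ => by
              rw [hkm]; linear_combination (χ (v l) * χ (v j)) * chi_sq (v m))
        _ = if l = j then (2:ℝ)^N else 0 := sum_chi2 l j
        _ = _ := by
            by_cases hlj : l = j
            · rw [if_pos hlj, if_pos (Or.inr ⟨hlj, hkm.symm⟩)]
            · rw [if_neg hlj, if_neg]
              rintro (⟨h1, h2⟩ | ⟨h1, h2⟩)
              · exact hkl (h1.symm)
              · exact hlj h1
    · rw [if_neg (by rintro (⟨h1, -⟩ | ⟨-, h2⟩); exacts [hkl h1.symm, hkm h2.symm])]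
      by_cases hjl : j = l
      · calc ∑ v : Fin N → Bool, χ (v l) * χ (v m) * (χ (v k) * χ (v j))
            = ∑ v : Fin N → Bool, χ (v m) * χ (v k) :=
              Finset.sum_congr rfl (fun v _ => by
                rw [hjl]; linear_combination (χ (v m) * χ (v k)) * chi_sq (v l))
          _ = 0 := by rw [sum_chi2, if_neg (fun hh => hkm hh.symm)]
      · by_cases hjm : j = m
        · calc ∑ v : Fin N → Bool, χ (v l) * χ (v m) * (χ (v k) * χ (v j))
              = ∑ v : Fin N → Bool, χ (v l) * χ (v k) :=
                Finset.sum_congr rfl (fun v _ => by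
                  rw [hjm]; linear_combination (χ (v l) * χ (v k)) * chi_sq (v m))
            _ = 0 := by rw [sum_chi2, if_neg (fun hh => hkl hh.symm)]
        · have := orth ({l, m, k, j} : Finset (Fin N))
          rw [if_neg (by simp)] at this
          rw [← this]
          refine Finset.sum_congr rfl (fun v _ => ?_)
          rw [Finset.prod_insert (by simp [hlm, Ne.symm hkl, Ne.symm hjl]),
            Finset.prod_insert (by simp [Ne.symm hkm, Ne.symm hjm]),
            Finset.prod_pair (f := fun i => χ (v i)) hkj]
          ring



lemma chi_abs (b : Bool) : |χ b| = 1 := by cases b <;> norm_num [χ]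

lemma ind_expand (a a' b b' : Bool) (X : ℝ) :
    (if b = a ∧ b' = a' then X else 0)
      = X * ((1 + χ a * χ b + χ a' * χ b' + χ a * χ a' * (χ b * χ b'))/4) := by
  cases a <;> cases a' <;> cases b <;> cases b' <;> norm_num [χ]

lemma inversion (x : Bool → Bool → ℝ) (h : ∑ b : Bool, ∑ b', x b b' = 1) (a a' : Bool) :
    (1 + χ a * (∑ b : Bool, χ b * ∑ b' : Bool, x b b')
       + χ a' * (∑ b' : Bool, χ b' * ∑ b : Bool, x b b')
       + χ a * χ a' * (∑ b : Bool, ∑ b' : Bool, χ b * χ b' * x b b')) / 4 = x a a' := by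
  simp only [Fintype.sum_bool] at h ⊢
  cases a <;> cases a' <;> simp [χ] <;> linarith

lemma L0 {N : ℕ} (l₀ m₀ : Fin N) (h : l₀ ≠ m₀) (ca ca' : ℝ) :
    ∑ v : Fin N → Bool,
      (1 + ca * χ (v l₀) + ca' * χ (v m₀) + ca * ca' * (χ (v l₀) * χ (v m₀))) = 2^N := by
  rw [Finset.sum_add_distrib, Finset.sum_add_distrib, Finset.sum_add_distrib,
    ← Finset.mul_sum, ← Finset.mul_sum, ← Finset.mul_sum,
    sum_one', sum_chi1, sum_chi1, sum_chi2, if_neg h]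
  ring

lemma L1 {N : ℕ} (l₀ m₀ : Fin N) (h : l₀ ≠ m₀) (ca ca' : ℝ) (l : Fin N) :
    ∑ v : Fin N → Bool,
      χ (v l) * (1 + ca * χ (v l₀) + ca' * χ (v m₀) + ca * ca' * (χ (v l₀) * χ (v m₀)))
      = ca * (if l = l₀ then (2:ℝ)^N else 0) + ca' * (if l = m₀ then (2:ℝ)^N else 0) := by
  calc ∑ v : Fin N → Bool,
      χ (v l) * (1 + ca * χ (v l₀) + ca' * χ (v m₀) + ca * ca' * (χ (v l₀) * χ (v m₀)))
      = ∑ v : Fin N → Bool, (χ (v l) + ca * (χ (v l) * χ (v l₀)) + ca' * (χ (v l) * χ (v m₀))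
          + (ca * ca') * (χ (v l₀) * χ (v m₀) * χ (v l))) :=
        Finset.sum_congr rfl (fun v _ => by ring)
    _ = _ := by
        rw [Finset.sum_add_distrib, Finset.sum_add_distrib, Finset.sum_add_distrib,
          ← Finset.mul_sum, ← Finset.mul_sum, ← Finset.mul_sum,
          sum_chi1, sum_chi2, sum_chi2, sum_chi3 l₀ m₀ l h]
        ring

lemma L2 {N : ℕ} (l₀ m₀ : Fin N) (h : l₀ ≠ m₀) (ca ca' : ℝ) (l m : Fin N) (hne : l ≠ m) :
    ∑ v : Fin N → Bool,
      χ (v l) * χ (v m) * (1 + ca * χ (v l₀) + ca' * χ (v m₀) + ca * ca' * (χ (v l₀) * χ (v m₀)))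
      = ca * ca' * (if l = l₀ ∧ m = m₀ ∨ l = m₀ ∧ m = l₀ then (2:ℝ)^N else 0) := by
  calc ∑ v : Fin N → Bool,
      χ (v l) * χ (v m) * (1 + ca * χ (v l₀) + ca' * χ (v m₀) + ca * ca' * (χ (v l₀) * χ (v m₀)))
      = ∑ v : Fin N → Bool, (χ (v l) * χ (v m) + ca * (χ (v l) * χ (v m) * χ (v l₀))
          + ca' * (χ (v l) * χ (v m) * χ (v m₀))
          + (ca * ca') * (χ (v l) * χ (v m) * (χ (v l₀) * χ (v m₀)))) :=
        Finset.sum_congr rfl (fun v _ => by ring)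
    _ = _ := by
        rw [Finset.sum_add_distrib, Finset.sum_add_distrib, Finset.sum_add_distrib,
          ← Finset.mul_sum, ← Finset.mul_sum, ← Finset.mul_sum,
          sum_chi2, if_neg hne, sum_chi3 l m l₀ hne, sum_chi3 l m m₀ hne,
          sum_chi4 l m l₀ m₀ hne h]
        ring

theorem pair_marginal_problem_near_uniform :
    ∃ c₀ : ℝ, 0 < c₀ ∧
      ∀ (N : ℕ), 2 ≤ N →
      ∀ ρ : Fin N → Fin N → Bool → Bool → ℝ,
        -- each ρ_{l,m}, l < m, is a probability distribution on {0,1}²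
        (∀ l m, l < m → (∀ a a', 0 ≤ ρ l m a a') ∧ (∑ a : Bool, ∑ a' : Bool, ρ l m a a' = 1)) →
        -- marginal consistency: each coordinate has a single induced single-bit marginal
        (∃ ρ₁ : Fin N → Bool → ℝ, ∀ l m, l < m →
          (∀ a : Bool, ∑ a' : Bool, ρ l m a a' = ρ₁ l a) ∧
          (∀ a' : Bool, ∑ a : Bool, ρ l m a a' = ρ₁ m a')) →
        -- all bit-pair masses are within c₀/N² of 1/4
        (∀ l m, l < m → ∀ a a' : Bool, |ρ l m a a' - 1 / 4| ≤ c₀ / (N : ℝ) ^ 2) →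
        ∃ P : (Fin N → Bool) → ℝ,
          (∀ v, 0 ≤ P v) ∧ (∑ v, P v = 1) ∧
          ∀ l m, l < m → ∀ a a' : Bool,
            ∑ v ∈ univ.filter (fun v : Fin N → Bool => v l = a ∧ v m = a'), P v
              = ρ l m a a' := by
  refine ⟨1/6, by norm_num, ?_⟩
  intro N hN ρ hprob hmc hclose
  obtain ⟨ρ₁, hmarg⟩ := hmc
  have hN0 : 0 < N := by omega
  have hNpos : (0:ℝ) < (N:ℝ) := by exact_mod_cast hN0
  have hN2 : (2:ℝ) ≤ (N:ℝ) := by exact_mod_cast hN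
  have h2N : (0:ℝ) < (2:ℝ)^N := by positivity
  set d : ℝ := 1/6 / (N:ℝ)^2 with hd_def
  have hd_pos : 0 < d := by positivity
  set s : Fin N → ℝ := fun l => ∑ b : Bool, χ b * ρ₁ l b with hs_def
  set t : Fin N → Fin N → ℝ := fun l m => ∑ b : Bool, ∑ b' : Bool, χ b * χ b' * ρ l m b b'
    with ht_def
  -- bound on the single-bit marginals
  have hρ₁ : ∀ (l : Fin N) (b : Bool), |ρ₁ l b - 1/2| ≤ 2 * d := by
    intro l b
    set i0 : Fin N := ⟨0, by omega⟩ with hi0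
    by_cases hl : l = i0
    · set i1 : Fin N := ⟨1, by omega⟩ with hi1
      have h01 : i0 < i1 := by simp [hi0, hi1, Fin.lt_def]
      have hm := (hmarg i0 i1 h01).1 b
      rw [Fintype.sum_bool] at hm
      have c1 := hclose i0 i1 h01 b true
      have c2 := hclose i0 i1 h01 b false
      rw [abs_le] at c1 c2 ⊢
      rw [hl, ← hm]
      constructor <;> [linarith [c1.1, c2.1]; linarith [c1.2, c2.2]]
    · have h0l : i0 < l := by
        rw [Fin.lt_def]
        show 0 < l.val
        exact Nat.pos_of_ne_zero (fun hh => hl (Fin.ext hh))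
      have hm := (hmarg i0 l h0l).2 b
      rw [Fintype.sum_bool] at hm
      have c1 := hclose i0 l h0l true b
      have c2 := hclose i0 l h0l false b
      rw [abs_le] at c1 c2 ⊢
      rw [← hm]
      constructor <;> [linarith [c1.1, c2.1]; linarith [c1.2, c2.2]]
  have hs_bound : ∀ l : Fin N, |s l| ≤ 4 * d := by
    intro l
    have h1 := hρ₁ l true
    have h2 := hρ₁ l false
    rw [abs_le] at h1 h2 ⊢
    rw [hs_def]
    simp only [Fintype.sum_bool, χ]
    norm_num
    constructor <;> linarith [h1.1, h1.2, h2.1, h2.2]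
  have ht_bound : ∀ l m : Fin N, l < m → |t l m| ≤ 4 * d := by
    intro l m hlt
    have c1 := hclose l m hlt true true
    have c2 := hclose l m hlt true false
    have c3 := hclose l m hlt false true
    have c4 := hclose l m hlt false false
    rw [abs_le] at c1 c2 c3 c4 ⊢
    rw [ht_def]
    simp only [Fintype.sum_bool, χ]
    norm_num
    constructor <;> linarith [c1.1, c1.2, c2.1, c2.2, c3.1, c3.2, c4.1, c4.2]
  refine ⟨fun v => ((2:ℝ)^N)⁻¹ *
    (1 + (∑ l, s l * χ (v l)) +
      ∑ l, ∑ m, if l < m then t l m * (χ (v l) * χ (v m)) else 0), ?_, ?_, ?_⟩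
  · -- nonnegativity
    intro v
    dsimp only
    have hSa : |∑ l, s l * χ (v l)| ≤ (N:ℝ) * (4 * d) := by
      calc |∑ l, s l * χ (v l)| ≤ ∑ l, |s l * χ (v l)| := Finset.abs_sum_le_sum_abs _ _
        _ ≤ ∑ _l : Fin N, 4 * d := Finset.sum_le_sum (fun l _ => by
            rw [abs_mul, chi_abs, mul_one]; exact hs_bound l)
        _ = (N:ℝ) * (4 * d) := by
            rw [Finset.sum_const, Finset.card_univ, Fintype.card_fin, nsmul_eq_mul]
    have hSb : |∑ l, ∑ m, if l < m then t l m * (χ (v l) * χ (v m)) else 0|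
        ≤ (N:ℝ) * ((N:ℝ) * (4 * d)) := by
      calc |∑ l, ∑ m, if l < m then t l m * (χ (v l) * χ (v m)) else 0|
          ≤ ∑ l, |∑ m, if l < m then t l m * (χ (v l) * χ (v m)) else 0| :=
            Finset.abs_sum_le_sum_abs _ _
        _ ≤ ∑ _l : Fin N, (N:ℝ) * (4 * d) := by
            refine Finset.sum_le_sum (fun l _ => ?_)
            calc |∑ m, if l < m then t l m * (χ (v l) * χ (v m)) else 0|
                ≤ ∑ m, |if l < m then t l m * (χ (v l) * χ (v m)) else 0| :=
                  Finset.abs_sum_le_sum_abs _ _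
              _ ≤ ∑ _m : Fin N, 4 * d := by
                  refine Finset.sum_le_sum (fun m _ => ?_)
                  split_ifs with hlt
                  · rw [abs_mul, abs_mul, chi_abs, chi_abs, mul_one, mul_one]
                    exact ht_bound l m hlt
                  · rw [abs_zero]
                    positivity
              _ = (N:ℝ) * (4 * d) := by
                  rw [Finset.sum_const, Finset.card_univ, Fintype.card_fin, nsmul_eq_mul]
        _ = (N:ℝ) * ((N:ℝ) * (4 * d)) := by
            rw [Finset.sum_const, Finset.card_univ, Fintype.card_fin, nsmul_eq_mul]
    have e1 : (N:ℝ) * (4 * d) ≤ 1/3 := by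
      rw [hd_def]
      rw [show (N:ℝ) * (4 * (1/6 / (N:ℝ)^2)) = (2/3) / (N:ℝ) by field_simp; ring]
      rw [div_le_div_iff₀ hNpos (by norm_num : (0:ℝ) < 3)]
      nlinarith
    have e2 : (N:ℝ) * ((N:ℝ) * (4 * d)) = 2/3 := by
      rw [hd_def]; field_simp; ring
    have hlow1 := (abs_le.mp hSa).1
    have hlow2 := (abs_le.mp hSb).1
    apply mul_nonneg (by positivity)
    linarith
  · -- sums to one
    rw [← Finset.mul_sum]
    have hz1 : ∑ v : Fin N → Bool, ∑ l, s l * χ (v l) = 0 := by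
      rw [Finset.sum_comm]
      simp only [← Finset.mul_sum]
      simp [sum_chi1]
    have hz2 : ∑ v : Fin N → Bool,
        ∑ l, ∑ m, (if l < m then t l m * (χ (v l) * χ (v m)) else 0) = 0 := by
      rw [Finset.sum_comm]
      refine Finset.sum_eq_zero (fun l _ => ?_)
      rw [Finset.sum_comm]
      refine Finset.sum_eq_zero (fun m _ => ?_)
      have : ∀ v : Fin N → Bool, (if l < m then t l m * (χ (v l) * χ (v m)) else 0)
          = (if l < m then t l m else 0) * (χ (v l) * χ (v m)) := by
        intro v; split_ifs <;> ring
      rw [Finset.sum_congr rfl (fun v _ => this v), ← Finset.mul_sum, sum_chi2]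
      split_ifs with h1 h2
      · exact absurd (h2 ▸ h1) (lt_irrefl _)
      · simp
      · simp
      · simp
    rw [Finset.sum_add_distrib, Finset.sum_add_distrib, sum_one', hz1, hz2]
    rw [add_zero, add_zero, inv_mul_cancel₀ (ne_of_gt h2N)]
  · -- pair marginals
    intro l₀ m₀ hlt a a'
    have hne : l₀ ≠ m₀ := ne_of_lt hlt
    rw [Finset.sum_filter]
    set ca := χ a with hca
    set ca' := χ a' with hca'
    set E : (Fin N → Bool) → ℝ := fun v =>
      1 + ca * χ (v l₀) + ca' * χ (v m₀) + ca * ca' * (χ (v l₀) * χ (v m₀)) with hE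
    have key : ∑ v : Fin N → Bool,
        (1 + (∑ l, s l * χ (v l)) +
          ∑ l, ∑ m, if l < m then t l m * (χ (v l) * χ (v m)) else 0) * E v
        = 2^N * (1 + ca * s l₀ + ca' * s m₀ + ca * ca' * t l₀ m₀) := by
      have expand : ∀ v : Fin N → Bool,
          (1 + (∑ l, s l * χ (v l)) +
            ∑ l, ∑ m, if l < m then t l m * (χ (v l) * χ (v m)) else 0) * E v
          = E v + (∑ l, s l * (χ (v l) * E v)) +
            ∑ l, ∑ m, (if l < m then t l m else 0) * (χ (v l) * χ (v m) * E v) := by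
        intro v
        rw [add_mul, add_mul, one_mul, Finset.sum_mul, Finset.sum_mul]
        congr 1
        · congr 1
          exact Finset.sum_congr rfl (fun l _ => by ring)
        · refine Finset.sum_congr rfl (fun l _ => ?_)
          rw [Finset.sum_mul]
          refine Finset.sum_congr rfl (fun m _ => ?_)
          split_ifs <;> ring
      rw [Finset.sum_congr rfl (fun v _ => expand v), Finset.sum_add_distrib,
        Finset.sum_add_distrib]
      have T0 : ∑ v : Fin N → Bool, E v = 2^N := L0 l₀ m₀ hne ca ca'
      have T1 : ∑ v : Fin N → Bool, ∑ l, s l * (χ (v l) * E v)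
          = s l₀ * (ca * 2^N) + s m₀ * (ca' * 2^N) := by
        rw [Finset.sum_comm]
        have step : ∀ l : Fin N, ∑ v : Fin N → Bool, s l * (χ (v l) * E v)
            = s l * (ca * (if l = l₀ then (2:ℝ)^N else 0)
                + ca' * (if l = m₀ then (2:ℝ)^N else 0)) := by
          intro l
          rw [← Finset.mul_sum, L1 l₀ m₀ hne ca ca' l]
        rw [Finset.sum_congr rfl (fun l _ => step l)]
        have split : ∀ l : Fin N,
            s l * (ca * (if l = l₀ then (2:ℝ)^N else 0)
              + ca' * (if l = m₀ then (2:ℝ)^N else 0))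
            = (if l = l₀ then s l * (ca * 2^N) else 0)
              + (if l = m₀ then s l * (ca' * 2^N) else 0) := by
          intro l; split_ifs <;> ring
        rw [Finset.sum_congr rfl (fun l _ => split l), Finset.sum_add_distrib]
        simp [Finset.sum_ite_eq']
      have T2 : ∑ v : Fin N → Bool,
          ∑ l, ∑ m, (if l < m then t l m else 0) * (χ (v l) * χ (v m) * E v)
          = t l₀ m₀ * (ca * ca' * 2^N) := by
        rw [Finset.sum_comm]
        have step : ∀ l : Fin N,
            ∑ v : Fin N → Bool, ∑ m, (if l < m then t l m else 0) * (χ (v l) * χ (v m) * E v)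
            = ∑ m, (if l < m then t l m else 0) *
                ∑ v : Fin N → Bool, χ (v l) * χ (v m) * E v := by
          intro l
          rw [Finset.sum_comm]
          exact Finset.sum_congr rfl (fun m _ => (Finset.mul_sum _ _ _).symm)
        rw [Finset.sum_congr rfl (fun l _ => step l)]
        have ptw : ∀ l m : Fin N,
            (if l < m then t l m else 0) * ∑ v : Fin N → Bool, χ (v l) * χ (v m) * E v
            = if l = l₀ ∧ m = m₀ then t l m * (ca * ca' * 2^N) else 0 := by
          intro l m
          by_cases hlm2 : l < m
          · rw [if_pos hlm2, L2 l₀ m₀ hne ca ca' l m (ne_of_lt hlm2)]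
            by_cases hc : l = l₀ ∧ m = m₀
            · rw [if_pos (Or.inl hc), if_pos hc]
            · have hcond : ¬(l = l₀ ∧ m = m₀ ∨ l = m₀ ∧ m = l₀) := by
                rintro (hc1 | ⟨he1, he2⟩)
                · exact hc hc1
                · rw [he1, he2] at hlm2
                  exact absurd hlt (not_lt_of_gt hlm2)
              rw [if_neg hcond, if_neg hc]
              ring
          · have hcond : ¬(l = l₀ ∧ m = m₀) := by
              rintro ⟨he1, he2⟩
              rw [he1, he2] at hlm2
              exact hlm2 hlt
            rw [if_neg hlm2, if_neg hcond, zero_mul]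
        rw [Finset.sum_congr rfl (fun l _ =>
          Finset.sum_congr rfl (fun m _ => ptw l m))]
        simp [ite_and, Finset.sum_ite_eq']
      rw [T0, T1, T2]
      ring
    calc ∑ v : Fin N → Bool,
        (if v l₀ = a ∧ v m₀ = a' then
          ((2:ℝ)^N)⁻¹ * (1 + (∑ l, s l * χ (v l)) +
            ∑ l, ∑ m, if l < m then t l m * (χ (v l) * χ (v m)) else 0) else 0)
        = ∑ v : Fin N → Bool,
          (((2:ℝ)^N)⁻¹ * (1/4)) * ((1 + (∑ l, s l * χ (v l)) +
            ∑ l, ∑ m, if l < m then t l m * (χ (v l) * χ (v m)) else 0) * E v) := by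
          refine Finset.sum_congr rfl (fun v _ => ?_)
          rw [ind_expand a a' (v l₀) (v m₀)]
          rw [hE]
          ring
      _ = (((2:ℝ)^N)⁻¹ * (1/4)) * (2^N * (1 + ca * s l₀ + ca' * s m₀ + ca * ca' * t l₀ m₀)) := by
          rw [← Finset.mul_sum, key]
      _ = (1 + ca * s l₀ + ca' * s m₀ + ca * ca' * t l₀ m₀) / 4 := by
          field_simp
      _ = ρ l₀ m₀ a a' := by
          have hsl : s l₀ = ∑ b : Bool, χ b * ∑ b' : Bool, ρ l₀ m₀ b b' := by
            rw [hs_def]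
            exact Finset.sum_congr rfl (fun b _ => by rw [(hmarg l₀ m₀ hlt).1 b])
          have hsm : s m₀ = ∑ b' : Bool, χ b' * ∑ b : Bool, ρ l₀ m₀ b b' := by
            rw [hs_def]
            exact Finset.sum_congr rfl (fun b _ => by rw [(hmarg l₀ m₀ hlt).2 b])
          rw [hca, hca', hsl, hsm, ht_def]
          exact inversion _ (hprob l₀ m₀ hlt).2 a a'
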